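/- Let A be a positive bounded self-adjoint operator on a right quaternionic Hilbert space with m(A) = inf_{‖φ‖=1}⟨Aφ,φ⟩ and M(A) = sup_{‖φ‖=1}⟨Aφ,φ⟩. If λ ∈ ℍ and λ ∉ [m(A), M(A)] (as a real interval, λ not a real number in it), then R_λ(A) = A² − 2Re(λ)A + |λ|²I is injective with closed range, and in fact ‖R_λ(A)ψ‖ ≥ d²‖ψ‖ for all ψ, where d = dist(λ, [m(A), M(A)]). -/

import Mathlib

noncomputable section

open MulOpposite

abbrev Quat := Quaternion ℝ

class RQH (V : Type*) [NormedAddCommGroup V] [Module Quatᵐᵒᵖ V] where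
  inn : V → V → Quat
  conj_symm : ∀ φ ψ : V, star (inn φ ψ) = inn ψ φ
  add_right : ∀ φ ψ ω : V, inn φ (ψ + ω) = inn φ ψ + inn φ ω
  smul_right : ∀ (φ ψ : V) (q : Quat), inn φ (op q • ψ) = inn φ ψ * q
  norm_sq : ∀ φ : V, inn φ φ = ((‖φ‖ ^ 2 : ℝ) : Quat)

open RQH

variable {V : Type*} [NormedAddCommGroup V] [Module Quatᵐᵒᵖ V] [CompleteSpace V] [RQH V]

set_option linter.unusedSectionVars false

lemma inn_zero_right (φ : V) : inn φ (0 : V) = 0 := by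
  have h := add_right φ (0 : V) 0
  rw [add_zero] at h
  exact (left_eq_add.mp h)

lemma inn_zero_left (φ : V) : inn (0 : V) φ = 0 := by
  rw [← conj_symm, inn_zero_right, star_zero]

lemma inn_neg_right (φ ψ : V) : inn φ (-ψ) = -inn φ ψ := by
  have h := add_right φ ψ (-ψ)
  rw [add_neg_cancel, inn_zero_right] at h
  exact eq_neg_of_add_eq_zero_right h.symm

lemma inn_sub_right (φ ψ ω : V) : inn φ (ψ - ω) = inn φ ψ - inn φ ω := by
  rw [sub_eq_add_neg, add_right, inn_neg_right, sub_eq_add_neg]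

lemma inn_add_left (φ ψ ω : V) : inn (φ + ψ) ω = inn φ ω + inn ψ ω := by
  rw [← conj_symm, add_right, star_add, conj_symm, conj_symm]

lemma inn_sub_left (φ ψ ω : V) : inn (φ - ψ) ω = inn φ ω - inn ψ ω := by
  rw [← conj_symm, inn_sub_right, star_sub, conj_symm, conj_symm]

lemma inn_smul_left (q : Quat) (φ ψ : V) : inn ((op q) • φ) ψ = star q * inn φ ψ := by
  rw [← conj_symm, smul_right, star_mul, conj_symm]

lemma re_inn_symm (φ ψ : V) : (inn φ ψ).re = (inn ψ φ).re := by
  rw [← conj_symm φ ψ]; simp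

lemma inn_self_re (φ : V) : (inn φ φ).re = ‖φ‖ ^ 2 := by
  rw [norm_sq]; rfl

lemma norm_op_smul (q : Quat) (x : V) : ‖(op q) • x‖ = ‖q‖ * ‖x‖ := by
  have h : ((‖(op q) • x‖ ^ 2 : ℝ) : Quat) = ((‖q‖ ^ 2 * ‖x‖ ^ 2 : ℝ) : Quat) := by
    rw [← norm_sq, inn_smul_left, smul_right, norm_sq, Quaternion.coe_commutes,
      ← mul_assoc, Quaternion.star_mul_self, Quaternion.normSq_eq_norm_mul_self]
    norm_cast
    ring_nf
  have h2 : ‖(op q) • x‖ ^ 2 = ‖q‖ ^ 2 * ‖x‖ ^ 2 := Quaternion.coe_injective h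
  have := congrArg Real.sqrt h2
  rwa [Real.sqrt_sq (norm_nonneg _), show ‖q‖^2*‖x‖^2 = (‖q‖*‖x‖)^2 by ring,
    Real.sqrt_sq (by positivity)] at this

lemma re_real_mul (r : ℝ) (q : Quat) : ((r : Quat) * q).re = r * q.re := by
  simp [Quaternion.re_mul]

lemma re_mul_real (q : Quat) (r : ℝ) : (q * (r : Quat)).re = q.re * r := by
  simp [Quaternion.re_mul]

lemma re_inn_le (φ ψ : V) : (inn φ ψ).re ≤ ‖φ‖ * ‖ψ‖ := by
  by_cases hφ : φ = 0
  · simp [hφ, inn_zero_left, Quaternion.re_zero]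
  by_cases hψ : ψ = 0
  · simp [hψ, inn_zero_right, Quaternion.re_zero]
  have hφn : 0 < ‖φ‖ := norm_pos_iff.mpr hφ
  have hψn : 0 < ‖ψ‖ := norm_pos_iff.mpr hψ
  set b := (inn φ ψ).re with hb
  have key : ∀ t : ℝ, 0 ≤ t ^ 2 * ‖φ‖ ^ 2 - 2 * t * b + ‖ψ‖ ^ 2 := by
    intro t
    have h0 : (0 : ℝ) ≤ ‖(op ((t : ℝ) : Quat)) • φ - ψ‖ ^ 2 := by positivity
    rw [← inn_self_re] at h0
    rw [inn_sub_right, inn_sub_left, inn_sub_left, inn_smul_left, smul_right, smul_right,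
      inn_smul_left] at h0
    simp only [Quaternion.star_coe, ← mul_assoc] at h0
    have e1 : ((t:Quat) * inn φ φ * (t:Quat)).re = t ^ 2 * ‖φ‖ ^ 2 := by
      rw [re_mul_real, re_real_mul, inn_self_re]; ring
    have e2 : ((t:Quat) * inn φ ψ).re = t * b := re_real_mul t _
    have e3 : (inn ψ φ * (t:Quat)).re = t * b := by
      rw [re_mul_real, re_inn_symm]; ring
    simp only [Quaternion.re_sub, Quaternion.re_add, e1, e2, e3, inn_self_re] at h0
    linarith
  have h := key (‖ψ‖ / ‖φ‖)
  have hc : ‖ψ‖ / ‖φ‖ * ‖φ‖ = ‖ψ‖ := div_mul_cancel₀ _ (ne_of_gt hφn)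
  have ht : 0 < ‖ψ‖ / ‖φ‖ := div_pos hψn hφn
  nlinarith [h, hc, ht, mul_pos hφn hψn]


def IsBddRL (A : V → V) : Prop :=
  (∀ x y : V, A (x + y) = A x + A y) ∧
  (∀ (q : Quatᵐᵒᵖ) (x : V), A (q • x) = q • A x) ∧
  (∃ C : ℝ, ∀ x : V, ‖A x‖ ≤ C * ‖x‖)

def IsSA (A : V → V) : Prop := ∀ φ ψ : V, inn (A φ) ψ = inn φ (A ψ)

def IsPos (A : V → V) : Prop := ∀ φ : V, ∃ r : ℝ, 0 ≤ r ∧ inn (A φ) φ = (r : Quat)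

def opN (A : V → V) : ℝ := sSup { r : ℝ | ∃ φ : V, ‖φ‖ = 1 ∧ r = ‖A φ‖ }

def mA (A : V → V) : ℝ := sInf { r : ℝ | ∃ φ : V, ‖φ‖ = 1 ∧ r = (inn (A φ) φ).re }

def MA (A : V → V) : ℝ := sSup { r : ℝ | ∃ φ : V, ‖φ‖ = 1 ∧ r = (inn (A φ) φ).re }

def Rq (A : V → V) (l : Quat) (ψ : V) : V :=
  A (A ψ) - op ((2 * l.re : ℝ) : Quat) • A ψ + op ((‖l‖ ^ 2 : ℝ) : Quat) • ψ

def SInv (T : V → V) : Prop :=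
  ∃ B : V → V, IsBddRL B ∧ (∀ x, T (B x) = x) ∧ (∀ x, B (T x) = x)

def sspec (A : V → V) : Set Quat := { l | ¬ SInv (Rq A l) }

lemma mapZero {A : V → V} (hadd : ∀ x y : V, A (x + y) = A x + A y) : A 0 = 0 := by
  have h := hadd 0 0
  rw [add_zero] at h
  exact right_eq_add.mp h

lemma mapNeg {A : V → V} (hsmul : ∀ (q : Quatᵐᵒᵖ) (x : V), A (q • x) = q • A x) (x : V) :
    A (-x) = -A x := by
  have h := hsmul (-1) x
  simpa [neg_one_smul] using h

lemma mapSub {A : V → V} (hadd : ∀ x y : V, A (x + y) = A x + A y)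
    (hsmul : ∀ (q : Quatᵐᵒᵖ) (x : V), A (q • x) = q • A x) (x y : V) :
    A (x - y) = A x - A y := by
  rw [sub_eq_add_neg, hadd, mapNeg hsmul, sub_eq_add_neg]

lemma exists_unit [Nontrivial V] : ∃ φ : V, ‖φ‖ = 1 := by
  obtain ⟨x, hx⟩ := exists_ne (0 : V)
  have hxn : 0 < ‖x‖ := norm_pos_iff.mpr hx
  refine ⟨op ((‖x‖⁻¹ : ℝ) : Quat) • x, ?_⟩
  rw [norm_op_smul, Quaternion.norm_coe, Real.norm_eq_abs, abs_of_nonneg (by positivity),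
    inv_mul_cancel₀ (ne_of_gt hxn)]

lemma re_inn_sA_smul {A : V → V} (hsmul : ∀ (q : Quatᵐᵒᵖ) (x : V), A (q • x) = q • A x)
    (c : ℝ) (ψ : V) :
    (inn (A (op ((c:ℝ):Quat) • ψ)) (op ((c:ℝ):Quat) • ψ)).re = c ^ 2 * (inn (A ψ) ψ).re := by
  rw [hsmul, inn_smul_left, smul_right, Quaternion.star_coe, re_real_mul, re_mul_real]
  ring

lemma spec_facts [Nontrivial V] (A : V → V) (hA : IsBddRL A) (hpos : IsPos A) :
    mA A ≤ MA A ∧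
      ∀ ψ : V, mA A * ‖ψ‖ ^ 2 ≤ (inn (A ψ) ψ).re ∧ (inn (A ψ) ψ).re ≤ MA A * ‖ψ‖ ^ 2 := by
  obtain ⟨hadd, hsmul, C, hC⟩ := hA
  set S := { r : ℝ | ∃ φ : V, ‖φ‖ = 1 ∧ r = (inn (A φ) φ).re } with hS
  have hSne : S.Nonempty := by
    obtain ⟨φ, hφ⟩ := exists_unit (V := V)
    exact ⟨_, φ, hφ, rfl⟩
  have hBB : BddBelow S := by
    refine ⟨0, ?_⟩
    rintro r ⟨φ, h1, rfl⟩
    obtain ⟨s, hs0, hseq⟩ := hpos φ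
    rw [hseq]
    simpa using hs0
  have hBA : BddAbove S := by
    refine ⟨C, ?_⟩
    rintro r ⟨φ, h1, rfl⟩
    calc (inn (A φ) φ).re ≤ ‖A φ‖ * ‖φ‖ := re_inn_le _ _
      _ ≤ C * ‖φ‖ * ‖φ‖ := by
          have := hC φ
          nlinarith [norm_nonneg φ]
      _ = C := by rw [h1]; ring
  have hmM : mA A ≤ MA A := by
    obtain ⟨r, hr⟩ := hSne
    exact le_trans (csInf_le hBB hr) (le_csSup hBA hr)
  refine ⟨hmM, fun ψ => ?_⟩
  by_cases hψ : ψ = 0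
  · simp [hψ, mapZero hadd, inn_zero_left, Quaternion.re_zero]
  have hψn : 0 < ‖ψ‖ := norm_pos_iff.mpr hψ
  set c : ℝ := ‖ψ‖⁻¹ with hc
  have hcn : 0 < c := by positivity
  have hφ1 : ‖op ((c:ℝ):Quat) • ψ‖ = 1 := by
    rw [norm_op_smul, Quaternion.norm_coe, Real.norm_eq_abs, abs_of_nonneg (le_of_lt hcn), hc,
      inv_mul_cancel₀ (ne_of_gt hψn)]
  have hmem : c ^ 2 * (inn (A ψ) ψ).re ∈ S :=
    ⟨op ((c:ℝ):Quat) • ψ, hφ1, (re_inn_sA_smul hsmul c ψ).symm⟩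
  have h1 : mA A ≤ c ^ 2 * (inn (A ψ) ψ).re := csInf_le hBB hmem
  have h2 : c ^ 2 * (inn (A ψ) ψ).re ≤ MA A := le_csSup hBA hmem
  have hcψ : c * ‖ψ‖ = 1 := inv_mul_cancel₀ (ne_of_gt hψn)
  have hc2 : c ^ 2 * ‖ψ‖ ^ 2 = 1 := by nlinarith [hcψ]
  have ht : c ^ 2 * (inn (A ψ) ψ).re * ‖ψ‖ ^ 2 = (inn (A ψ) ψ).re := by
    calc c ^ 2 * (inn (A ψ) ψ).re * ‖ψ‖ ^ 2 = (inn (A ψ) ψ).re * (c ^ 2 * ‖ψ‖ ^ 2) := by ring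
      _ = (inn (A ψ) ψ).re := by rw [hc2, mul_one]
  constructor
  · nlinarith [mul_le_mul_of_nonneg_right h1 (sq_nonneg ‖ψ‖), ht]
  · nlinarith [mul_le_mul_of_nonneg_right h2 (sq_nonneg ‖ψ‖), ht]

lemma Rq_sub {A : V → V} (hadd : ∀ x y : V, A (x + y) = A x + A y)
    (hsmul : ∀ (q : Quatᵐᵒᵖ) (x : V), A (q • x) = q • A x) (l : Quat) (x y : V) :
    Rq A l (x - y) = Rq A l x - Rq A l y := by
  unfold Rq
  rw [mapSub hadd hsmul x y, mapSub hadd hsmul (A x) (A y), smul_sub, smul_sub]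
  abel

lemma norm_sub_coe_sq (l : Quat) (p : ℝ) :
    ‖l - (p : Quat)‖ ^ 2 = (l.re - p) ^ 2 + (‖l‖ ^ 2 - l.re ^ 2) := by
  have h1 : ‖l - (p : Quat)‖ ^ 2 = Quaternion.normSq (l - (p : Quat)) := by
    rw [sq, Quaternion.normSq_eq_norm_mul_self]
  have h2 : ‖l‖ ^ 2 = Quaternion.normSq l := by
    rw [sq, Quaternion.normSq_eq_norm_mul_self]
  rw [h1, h2, Quaternion.normSq_def', Quaternion.normSq_def']
  simp only [Quaternion.re_sub, Quaternion.imI_sub, Quaternion.imJ_sub, Quaternion.imK_sub,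
    Quaternion.re_coe, Quaternion.imI_coe, Quaternion.imJ_coe, Quaternion.imK_coe, sub_zero]
  ring

lemma re_sq_le_normsq (l : Quat) : l.re ^ 2 ≤ ‖l‖ ^ 2 := by
  have h2 : ‖l‖ ^ 2 = Quaternion.normSq l := by
    rw [sq, Quaternion.normSq_eq_norm_mul_self]
  rw [h2, Quaternion.normSq_def']
  nlinarith [sq_nonneg l.imI, sq_nonneg l.imJ, sq_nonneg l.imK]

set_option maxHeartbeats 1000000 in
lemma key_est [Nontrivial V] (A : V → V) (hA : IsBddRL A) (hsa : IsSA A) (hpos : IsPos A)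
    (l : Quat) (ψ : V) :
    (Metric.infDist l ((fun r : ℝ => (r : Quat)) '' Set.Icc (mA A) (MA A))) ^ 2 * ‖ψ‖
      ≤ ‖Rq A l ψ‖ := by
  obtain ⟨hmM, hbounds⟩ := spec_facts A hA hpos
  obtain ⟨hadd, hsmul, C, hC⟩ := hA
  by_cases hψ : ψ = 0
  · simp [hψ]
  have hψn : 0 < ‖ψ‖ := norm_pos_iff.mpr hψ
  obtain ⟨hbnd1, hbnd2⟩ := hbounds ψ
  set m := mA A with hm
  set M := MA A with hM
  set a := l.re with ha
  set d := Metric.infDist l ((fun r : ℝ => (r : Quat)) '' Set.Icc m M) with hd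
  set p := max m (min a M) with hp
  have hpIcc : p ∈ Set.Icc m M := ⟨le_max_left _ _, max_le hmM (min_le_right _ _)⟩
  have hdp : d ≤ dist l ((p : ℝ) : Quat) :=
    Metric.infDist_le_dist_of_mem ⟨p, hpIcc, rfl⟩
  have hd0 : 0 ≤ d := Metric.infDist_nonneg
  have hd2 : d ^ 2 ≤ (a - p) ^ 2 + (‖l‖ ^ 2 - a ^ 2) := by
    calc d ^ 2 ≤ dist l ((p : ℝ) : Quat) ^ 2 := by
          exact pow_le_pow_left₀ hd0 hdp 2
      _ = (a - p) ^ 2 + (‖l‖ ^ 2 - a ^ 2) := by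
          rw [dist_eq_norm, norm_sub_coe_sq]
  have hb2 : 0 ≤ ‖l‖ ^ 2 - a ^ 2 := by
    have := re_sq_le_normsq l; linarith
  have hsym : (inn ψ (A ψ)).re = (inn (A ψ) ψ).re := re_inn_symm ψ (A ψ)
  -- ⟨w, ψ⟩.re = t - a n²
  have hwpsi : (inn (A ψ - op ((a : ℝ) : Quat) • ψ) ψ).re
      = (inn (A ψ) ψ).re - a * ‖ψ‖ ^ 2 := by
    simp only [inn_sub_left, inn_smul_left, Quaternion.star_coe, Quaternion.re_sub,
      re_real_mul, inn_self_re]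
  have hwpsi' : (inn (op ((a : ℝ) : Quat) • ψ - A ψ) ψ).re
      = a * ‖ψ‖ ^ 2 - (inn (A ψ) ψ).re := by
    simp only [inn_sub_left, inn_smul_left, Quaternion.star_coe, Quaternion.re_sub,
      re_real_mul, inn_self_re]
  -- ‖w‖² = u² - 2 a t + a² n²
  have hwnorm : ‖A ψ - op ((a : ℝ) : Quat) • ψ‖ ^ 2
      = ‖A ψ‖ ^ 2 - 2 * a * (inn (A ψ) ψ).re + a ^ 2 * ‖ψ‖ ^ 2 := by
    rw [← inn_self_re]
    simp only [inn_sub_left, inn_sub_right, inn_smul_left, smul_right, Quaternion.star_coe,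
      Quaternion.re_sub, re_real_mul, re_mul_real, inn_self_re]
    rw [hsym]
    ring
  -- ⟨Rq ψ, ψ⟩.re
  have hE : (inn (Rq A l ψ) ψ).re
      = ‖A ψ‖ ^ 2 - 2 * a * (inn (A ψ) ψ).re + ‖l‖ ^ 2 * ‖ψ‖ ^ 2 := by
    unfold Rq
    have h1 : inn (A (A ψ)) ψ = inn (A ψ) (A ψ) := hsa (A ψ) ψ
    simp only [inn_add_left, inn_sub_left, inn_smul_left, Quaternion.star_coe,
      Quaternion.re_add, Quaternion.re_sub, re_real_mul, h1, inn_self_re, ← ha]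
  -- (a - p)² n² ≤ ‖w‖²
  have hproj : (a - p) ^ 2 * ‖ψ‖ ^ 2 ≤ ‖A ψ - op ((a : ℝ) : Quat) • ψ‖ ^ 2 := by
    rcases lt_or_ge a m with ham | ham
    · have hpm : p = m := by
        rw [hp, min_eq_left (le_trans (le_of_lt ham) hmM), max_eq_left (le_of_lt ham)]
      have hcs : (inn (A ψ - op ((a : ℝ) : Quat) • ψ) ψ).re
          ≤ ‖A ψ - op ((a : ℝ) : Quat) • ψ‖ * ‖ψ‖ := re_inn_le _ _
      have h3 : (m - a) * ‖ψ‖ ^ 2 ≤ ‖A ψ - op ((a : ℝ) : Quat) • ψ‖ * ‖ψ‖ := by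
        rw [hwpsi] at hcs; linarith
      have h4 : 0 ≤ (m - a) * ‖ψ‖ ^ 2 := mul_nonneg (by linarith) (sq_nonneg _)
      rw [hpm]
      have key := mul_self_le_mul_self h4 h3
      have h5 : (a - m) ^ 2 * ‖ψ‖ ^ 2 * ‖ψ‖ ^ 2
          ≤ ‖A ψ - op ((a : ℝ) : Quat) • ψ‖ ^ 2 * ‖ψ‖ ^ 2 := by nlinarith [key]
      exact le_of_mul_le_mul_right h5 (by positivity)
    rcases le_or_gt a M with haM | haM
    · have hpa : p = a := by rw [hp, min_eq_left haM, max_eq_right ham]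
      rw [hpa, sub_self]
      simpa using sq_nonneg ‖A ψ - op ((a : ℝ) : Quat) • ψ‖
    · have hpM : p = M := by
        rw [hp, min_eq_right (le_of_lt haM), max_eq_right hmM]
      have hcs : (inn (op ((a : ℝ) : Quat) • ψ - A ψ) ψ).re
          ≤ ‖A ψ - op ((a : ℝ) : Quat) • ψ‖ * ‖ψ‖ := by
        calc (inn (op ((a : ℝ) : Quat) • ψ - A ψ) ψ).re
            ≤ ‖op ((a : ℝ) : Quat) • ψ - A ψ‖ * ‖ψ‖ := re_inn_le _ _
          _ = ‖A ψ - op ((a : ℝ) : Quat) • ψ‖ * ‖ψ‖ := by rw [norm_sub_rev]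
      have h3 : (a - M) * ‖ψ‖ ^ 2 ≤ ‖A ψ - op ((a : ℝ) : Quat) • ψ‖ * ‖ψ‖ := by
        rw [hwpsi'] at hcs; linarith
      have h4 : 0 ≤ (a - M) * ‖ψ‖ ^ 2 := mul_nonneg (by linarith) (sq_nonneg _)
      rw [hpM]
      have key := mul_self_le_mul_self h4 h3
      have h5 : (a - M) ^ 2 * ‖ψ‖ ^ 2 * ‖ψ‖ ^ 2
          ≤ ‖A ψ - op ((a : ℝ) : Quat) • ψ‖ ^ 2 * ‖ψ‖ ^ 2 := by nlinarith [key]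
      exact le_of_mul_le_mul_right h5 (by positivity)
  -- final chain
  have step3 : (inn (Rq A l ψ) ψ).re ≤ ‖Rq A l ψ‖ * ‖ψ‖ := re_inn_le _ _
  have hfin : d ^ 2 * ‖ψ‖ ^ 2 ≤ ‖Rq A l ψ‖ * ‖ψ‖ := by
    have step1 : d ^ 2 * ‖ψ‖ ^ 2 ≤ ((a - p) ^ 2 + (‖l‖ ^ 2 - a ^ 2)) * ‖ψ‖ ^ 2 :=
      mul_le_mul_of_nonneg_right hd2 (sq_nonneg _)
    have hb2n : 0 ≤ (‖l‖ ^ 2 - a ^ 2) * ‖ψ‖ ^ 2 := mul_nonneg hb2 (sq_nonneg _)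
    nlinarith [hproj, hwnorm, hE, step3, hb2n, step1]
  have h6 : d ^ 2 * ‖ψ‖ * ‖ψ‖ ≤ ‖Rq A l ψ‖ * ‖ψ‖ := by nlinarith [hfin]
  exact le_of_mul_le_mul_right h6 hψn

set_option maxHeartbeats 1000000 in
/-- If λ ∉ [m(A), M(A)] then ‖R_λ(A)ψ‖ ≥ d²‖ψ‖, R_λ(A) is injective with closed range. -/
theorem stmt9 [Nontrivial V] (A : V → V) (hA : IsBddRL A) (hsa : IsSA A) (hpos : IsPos A)
    (l : Quat) (hl : ∀ r ∈ Set.Icc (mA A) (MA A), l ≠ (r : Quat)) :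
    (∀ ψ : V,
        (Metric.infDist l ((fun r : ℝ => (r : Quat)) '' Set.Icc (mA A) (MA A))) ^ 2 * ‖ψ‖
          ≤ ‖Rq A l ψ‖) ∧
      Function.Injective (Rq A l) ∧ IsClosed (Set.range (Rq A l)) := by
  have hpart1 := key_est A hA hsa hpos l
  obtain ⟨hmM, _⟩ := spec_facts A hA hpos
  obtain ⟨hadd, hsmul, C, hC⟩ := hA
  set K : Set Quat := (fun r : ℝ => (r : Quat)) '' Set.Icc (mA A) (MA A) with hK
  set d := Metric.infDist l K with hd
  -- d > 0
  have hKcpt : IsCompact K := (isCompact_Icc).image Quaternion.continuous_coe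
  have hKcl : IsClosed K := hKcpt.isClosed
  have hKne : K.Nonempty := ⟨(mA A : Quat), mA A, ⟨le_refl _, hmM⟩, rfl⟩
  have hlK : l ∉ K := by
    rintro ⟨r, hr, hrl⟩
    exact hl r hr hrl.symm
  have hdpos : 0 < d := (hKcl.notMem_iff_infDist_pos hKne).mp hlK
  -- injectivity
  have hinj : Function.Injective (Rq A l) := by
    intro x y hxy
    have h0 : Rq A l (x - y) = 0 := by
      rw [Rq_sub hadd hsmul, hxy, sub_self]
    have := hpart1 (x - y)
    rw [h0, norm_zero] at this
    have hxy0 : ‖x - y‖ ≤ 0 := by nlinarith [this, hdpos, mul_pos hdpos hdpos]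
    have : ‖x - y‖ = 0 := le_antisymm hxy0 (norm_nonneg _)
    rw [norm_eq_zero, sub_eq_zero] at this
    exact this
  refine ⟨hpart1, hinj, ?_⟩
  -- Lipschitz continuity of Rq
  set C' := max C 0 with hC'
  have hC'0 : 0 ≤ C' := le_max_right _ _
  have hC'bd : ∀ x : V, ‖A x‖ ≤ C' * ‖x‖ := fun x =>
    le_trans (hC x) (mul_le_mul_of_nonneg_right (le_max_left _ _) (norm_nonneg _))
  set K0 : ℝ := C' * C' + ‖((2 * l.re : ℝ) : Quat)‖ * C' + ‖l‖ ^ 2 with hK0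
  have hRqbd : ∀ ψ : V, ‖Rq A l ψ‖ ≤ K0 * ‖ψ‖ := by
    intro ψ
    have t1 : ‖A (A ψ)‖ ≤ C' * C' * ‖ψ‖ := by
      calc ‖A (A ψ)‖ ≤ C' * ‖A ψ‖ := hC'bd _
        _ ≤ C' * (C' * ‖ψ‖) := mul_le_mul_of_nonneg_left (hC'bd ψ) hC'0
        _ = C' * C' * ‖ψ‖ := by ring
    have t2 : ‖op ((2 * l.re : ℝ) : Quat) • A ψ‖ ≤ ‖((2 * l.re : ℝ) : Quat)‖ * C' * ‖ψ‖ := by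
      rw [norm_op_smul]
      calc ‖((2 * l.re : ℝ) : Quat)‖ * ‖A ψ‖
          ≤ ‖((2 * l.re : ℝ) : Quat)‖ * (C' * ‖ψ‖) :=
            mul_le_mul_of_nonneg_left (hC'bd ψ) (norm_nonneg _)
        _ = ‖((2 * l.re : ℝ) : Quat)‖ * C' * ‖ψ‖ := by ring
    have t3 : ‖op ((‖l‖ ^ 2 : ℝ) : Quat) • ψ‖ = ‖l‖ ^ 2 * ‖ψ‖ := by
      rw [norm_op_smul, Quaternion.norm_coe, Real.norm_eq_abs, abs_of_nonneg (sq_nonneg _)]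
    calc ‖Rq A l ψ‖ ≤ ‖A (A ψ) - op ((2 * l.re : ℝ) : Quat) • A ψ‖
          + ‖op ((‖l‖ ^ 2 : ℝ) : Quat) • ψ‖ := norm_add_le _ _
      _ ≤ ‖A (A ψ)‖ + ‖op ((2 * l.re : ℝ) : Quat) • A ψ‖
          + ‖op ((‖l‖ ^ 2 : ℝ) : Quat) • ψ‖ := by
            have := norm_sub_le (A (A ψ)) (op ((2 * l.re : ℝ) : Quat) • A ψ)
            linarith
      _ ≤ K0 * ‖ψ‖ := by rw [hK0, t3]; linarith [t1, t2]
  have hcont : Continuous (Rq A l) := by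
    have hlip : LipschitzWith (Real.toNNReal K0) (Rq A l) := by
      apply LipschitzWith.of_dist_le_mul
      intro x y
      rw [dist_eq_norm, dist_eq_norm, ← Rq_sub hadd hsmul]
      calc ‖Rq A l (x - y)‖ ≤ K0 * ‖x - y‖ := hRqbd _
        _ ≤ (Real.toNNReal K0 : ℝ) * ‖x - y‖ := by
            apply mul_le_mul_of_nonneg_right _ (norm_nonneg _)
            rw [Real.coe_toNNReal']
            exact le_max_left _ _
    exact hlip.continuous
  -- closed range
  apply IsSeqClosed.isClosed
  intro u pt hu hup
  choose g hg using hu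
  have hcu : CauchySeq u := hup.cauchySeq
  have hcg : CauchySeq g := by
    rw [Metric.cauchySeq_iff] at hcu ⊢
    intro ε hε
    obtain ⟨N, hN⟩ := hcu (d ^ 2 * ε) (by positivity)
    refine ⟨N, fun i hi j hj => ?_⟩
    have hdist := hN i hi j hj
    have hle : d ^ 2 * dist (g i) (g j) ≤ dist (u i) (u j) := by
      rw [dist_eq_norm, dist_eq_norm, ← hg i, ← hg j, ← Rq_sub hadd hsmul]
      exact hpart1 (g i - g j)
    have : d ^ 2 * dist (g i) (g j) < d ^ 2 * ε := lt_of_le_of_lt hle hdist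
    exact lt_of_mul_lt_mul_left this (le_of_lt (by positivity))
  obtain ⟨ψ, hψ⟩ := cauchySeq_tendsto_of_complete hcg
  have htend : Filter.Tendsto (fun n => Rq A l (g n)) Filter.atTop (nhds (Rq A l ψ)) :=
    ((hcont.tendsto ψ).comp hψ)
  have hueq : (fun n => Rq A l (g n)) = u := funext hg
  rw [hueq] at htend
  exact ⟨ψ, tendsto_nhds_unique htend hup⟩
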